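/- arXiv:1808.00663 — 2 statements merged into one kernel-verified Lean document; each statement's English description precedes it below -/
import Mathlib

section
/- Let U₁, U₂ be two solutions of the Riccati equation U' + U² + K(t) = 0 along the same curve (same continuous function K: ℝ → ℝ), defined for all t ≥ 0, with U₁(0) ≥ U₂(0) and U₂(t) ≥ 0 for all t ≥ 0. Then U₁(t) ≥ U₂(t) for all t ≥ 0, and moreover 0 ≤ U₁(t) - U₂(t) ≤ (U₁(0) - U₂(0))·exp(-2∫_0^t U₂(s) ds). -/
open MeasureTheory Real

theorem riccati_solutions_comparison (K U₁ U₂ : ℝ → ℝ) (hK : Continuous K)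
    (hU₁ : ∀ t, 0 ≤ t → HasDerivAt U₁ (-(U₁ t) ^ 2 - K t) t)
    (hU₂ : ∀ t, 0 ≤ t → HasDerivAt U₂ (-(U₂ t) ^ 2 - K t) t)
    (hU₂nonneg : ∀ t, 0 ≤ t → 0 ≤ U₂ t)
    (h0 : U₂ 0 ≤ U₁ 0) :
    ∀ t, 0 ≤ t → U₂ t ≤ U₁ t ∧
      U₁ t - U₂ t ≤ (U₁ 0 - U₂ 0) * Real.exp (-2 * ∫ s in (0:ℝ)..t, U₂ s) := by
  have hcU₁ : ContinuousOn U₁ (Set.Ici 0) := fun x hx =>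
    ((hU₁ x hx).continuousAt).continuousWithinAt
  have hcU₂ : ContinuousOn U₂ (Set.Ici 0) := fun x hx =>
    ((hU₂ x hx).continuousAt).continuousWithinAt
  set g : ℝ → ℝ := fun s => U₁ (max s 0) + U₂ (max s 0) with hg
  have hmax : Continuous (fun s : ℝ => max s 0) := continuous_id.max continuous_const
  have hmem : ∀ s : ℝ, max s 0 ∈ Set.Ici (0:ℝ) := fun s => le_max_right s 0
  have hgc : Continuous g :=
    (hcU₁.comp_continuous hmax hmem).add (hcU₂.comp_continuous hmax hmem)
  have hgeq : ∀ s, 0 ≤ s → g s = U₁ s + U₂ s := by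
    intro s hs; simp [hg, max_eq_left hs]
  have key : ∀ t, 0 ≤ t →
      U₁ t - U₂ t = (U₁ 0 - U₂ 0) * Real.exp (-∫ s in (0:ℝ)..t, g s) := by
    intro t ht
    set F : ℝ → ℝ := fun x => (U₁ x - U₂ x) * Real.exp (∫ s in (0:ℝ)..x, g s) with hF
    have hderiv : ∀ x ∈ Set.Icc 0 t, HasDerivAt F 0 x := by
      intro x hx
      have hx0 : (0:ℝ) ≤ x := hx.1
      have hG : HasDerivAt (fun u => ∫ s in (0:ℝ)..u, g s) (g x) x :=
        (hgc.integral_hasStrictDerivAt 0 x).hasDerivAt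
      have hW : HasDerivAt (fun y => U₁ y - U₂ y)
          ((-(U₁ x) ^ 2 - K x) - (-(U₂ x) ^ 2 - K x)) x := (hU₁ x hx0).sub (hU₂ x hx0)
      have hE : HasDerivAt (fun y => Real.exp (∫ s in (0:ℝ)..y, g s))
          (Real.exp (∫ s in (0:ℝ)..x, g s) * g x) x := hG.exp
      have h := hW.mul hE
      refine h.congr_deriv ?_
      rw [hgeq x hx0]; ring
    have hcont : ContinuousOn F (Set.Icc 0 t) := fun x hx =>
      (hderiv x hx).continuousAt.continuousWithinAt
    have hconst : F t = F 0 :=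
      constant_of_has_deriv_right_zero hcont
        (fun x hx => (hderiv x ⟨hx.1, hx.2.le⟩).hasDerivWithinAt) t ⟨ht, le_refl t⟩
    have h0' : F 0 = U₁ 0 - U₂ 0 := by simp [hF]
    have heq : (U₁ t - U₂ t) * Real.exp (∫ s in (0:ℝ)..t, g s) = U₁ 0 - U₂ 0 := by
      rw [← h0', ← hconst]
    have hexp : (0:ℝ) < Real.exp (∫ s in (0:ℝ)..t, g s) := Real.exp_pos _
    rw [Real.exp_neg]
    field_simp
    linarith [heq]
  intro t ht
  have hle : ∀ s, 0 ≤ s → U₂ s ≤ U₁ s := by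
    intro s hs
    have hk := key s hs
    nlinarith [Real.exp_pos (-∫ x in (0:ℝ)..s, g x)]
  refine ⟨hle t ht, ?_⟩
  rw [key t ht]
  have hint₂ : IntervalIntegrable (fun s => 2 * U₂ s) volume 0 t := by
    apply ContinuousOn.intervalIntegrable
    apply ContinuousOn.const_smul (c := (2:ℝ))
    exact hcU₂.mono (by rw [Set.uIcc_of_le ht]; exact Set.Icc_subset_Ici_self)
  have hintg : IntervalIntegrable g volume 0 t := hgc.intervalIntegrable 0 t
  have hmono : (∫ s in (0:ℝ)..t, 2 * U₂ s) ≤ ∫ s in (0:ℝ)..t, g s := by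
    apply intervalIntegral.integral_mono_on ht hint₂ hintg
    intro s hs
    rw [hgeq s hs.1]
    linarith [hle s hs.1]
  rw [intervalIntegral.integral_const_mul] at hmono
  have : (-∫ s in (0:ℝ)..t, g s) ≤ -2 * ∫ s in (0:ℝ)..t, U₂ s := by linarith
  exact mul_le_mul_of_nonneg_left (Real.exp_le_exp.mpr this) (by linarith)
end

section
/- Let K₁, K₂: [0,∞) → ℝ be continuous and let U₁, U₂ solve the Riccati equations Uᵢ' + Uᵢ² + Kᵢ = 0 with U₁(t) ≥ U₂(t) ≥ λ(t) ≥ 0 on an interval [s₀, τ] where U₁(s₀) = U₂(s₀). Then U₁(τ) - U₂(τ) ≤ ∫_{s₀}^{τ} exp(-2∫_s^{τ} λ(a) da)·|K₁(s) - K₂(s)| ds. -/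
open MeasureTheory Real Set

theorem riccati_difference_estimate (K₁ K₂ U₁ U₂ l : ℝ → ℝ) (s₀ τ : ℝ)
    (hs : s₀ ≤ τ)
    (hK₁ : ContinuousOn K₁ (Icc s₀ τ)) (hK₂ : ContinuousOn K₂ (Icc s₀ τ))
    (hU₁ : ∀ s ∈ Icc s₀ τ, HasDerivAt U₁ (-(U₁ s) ^ 2 - K₁ s) s)
    (hU₂ : ∀ s ∈ Icc s₀ τ, HasDerivAt U₂ (-(U₂ s) ^ 2 - K₂ s) s)
    (hl : ContinuousOn l (Icc s₀ τ))
    (hlnonneg : ∀ s ∈ Icc s₀ τ, 0 ≤ l s)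
    (horder : ∀ s ∈ Icc s₀ τ, l s ≤ U₂ s ∧ U₂ s ≤ U₁ s)
    (heq : U₁ s₀ = U₂ s₀) :
    U₁ τ - U₂ τ ≤
      ∫ s in s₀..τ, Real.exp (-2 * ∫ a in s..τ, l a) * |K₁ s - K₂ s| := by
  -- A t = ∫_{s₀}^t l, g t = exp(2 A t)
  set A : ℝ → ℝ := fun t => ∫ a in s₀..t, l a with hA_def
  set g : ℝ → ℝ := fun t => Real.exp (2 * A t) with hg_def
  have huIcc : uIcc s₀ τ = Icc s₀ τ := uIcc_of_le hs
  -- interval integrability of l on subintervals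
  have hl_int : ∀ t₁ ∈ Icc s₀ τ, ∀ t₂ ∈ Icc s₀ τ, IntervalIntegrable l volume t₁ t₂ := by
    intro t₁ h₁ t₂ h₂
    apply ContinuousOn.intervalIntegrable
    apply hl.mono
    rw [uIcc_comm] at *
    exact uIcc_subset_Icc h₂ h₁
  -- the integrand h s = g s * |K₁ s - K₂ s|
  set h : ℝ → ℝ := fun s => g s * |K₁ s - K₂ s| with hh_def
  have hA_cont : ContinuousOn A (Icc s₀ τ) := by
    rw [← huIcc]
    exact intervalIntegral.continuousOn_primitive_interval (by rw [huIcc]; exact hl.integrableOn_Icc)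
  have hg_cont : ContinuousOn g (Icc s₀ τ) :=
    Real.continuous_exp.comp_continuousOn (continuousOn_const.mul hA_cont)
  have hh_cont : ContinuousOn h (Icc s₀ τ) :=
    hg_cont.mul ((hK₁.sub hK₂).abs)
  have hh_int : ∀ t₁ ∈ Icc s₀ τ, ∀ t₂ ∈ Icc s₀ τ, IntervalIntegrable h volume t₁ t₂ := by
    intro t₁ h₁ t₂ h₂
    apply ContinuousOn.intervalIntegrable
    apply hh_cont.mono
    rw [uIcc_comm] at *
    exact uIcc_subset_Icc h₂ h₁
  -- derivative of A on the interior
  have hA_deriv : ∀ x ∈ Ioo s₀ τ, HasDerivAt A (l x) x := by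
    intro x hx
    apply intervalIntegral.integral_hasDerivAt_right
      (hl_int s₀ (left_mem_Icc.2 hs) x (Ioo_subset_Icc_self hx))
    · exact (hl.mono Ioo_subset_Icc_self).stronglyMeasurableAtFilter isOpen_Ioo x hx
    · exact (hl.mono Ioo_subset_Icc_self).continuousAt (isOpen_Ioo.mem_nhds hx)
  have hg_deriv : ∀ x ∈ Ioo s₀ τ, HasDerivAt g (2 * l x * g x) x := by
    intro x hx
    have := ((hA_deriv x hx).const_mul 2).exp
    simpa [hg_def, mul_comm] using this
  -- the key function F
  set W : ℝ → ℝ := fun t => U₁ t - U₂ t with hW_def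
  have hWnonneg : ∀ t ∈ Icc s₀ τ, 0 ≤ W t := fun t ht => sub_nonneg.2 (horder t ht).2
  set F : ℝ → ℝ := fun t => (∫ s in s₀..t, h s) - g t * W t with hF_def
  have hW_deriv : ∀ x ∈ Icc s₀ τ,
      HasDerivAt W ((-(U₁ x) ^ 2 - K₁ x) - (-(U₂ x) ^ 2 - K₂ x)) x := fun x hx =>
    (hU₁ x hx).sub (hU₂ x hx)
  have hW_cont : ContinuousOn W (Icc s₀ τ) := fun x hx =>
    ((hW_deriv x hx).continuousAt).continuousWithinAt
  have hF_cont : ContinuousOn F (Icc s₀ τ) := by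
    apply ContinuousOn.sub _ (hg_cont.mul hW_cont)
    rw [← huIcc]
    apply intervalIntegral.continuousOn_primitive_interval
    rw [huIcc]
    exact hh_cont.integrableOn_Icc
  have hIntIoo : interior (Icc s₀ τ) = Ioo s₀ τ := interior_Icc
  -- F is monotone on Icc
  have hF_mono : MonotoneOn F (Icc s₀ τ) := by
    apply monotoneOn_of_hasDerivWithinAt_nonneg (convex_Icc s₀ τ) hF_cont
      (f' := fun x => h x - (2 * l x * g x * W x +
        g x * ((-(U₁ x) ^ 2 - K₁ x) - (-(U₂ x) ^ 2 - K₂ x))))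
    · intro x hx
      rw [hIntIoo] at hx
      have hx' : x ∈ Icc s₀ τ := Ioo_subset_Icc_self hx
      have h1 : HasDerivAt (fun t => ∫ s in s₀..t, h s) (h x) x := by
        apply intervalIntegral.integral_hasDerivAt_right
          (hh_int s₀ (left_mem_Icc.2 hs) x hx')
        · exact (hh_cont.mono Ioo_subset_Icc_self).stronglyMeasurableAtFilter isOpen_Ioo x hx
        · exact (hh_cont.mono Ioo_subset_Icc_self).continuousAt (isOpen_Ioo.mem_nhds hx)
      have h2 : HasDerivAt (fun t => g t * W t)
          (2 * l x * g x * W x + g x * ((-(U₁ x) ^ 2 - K₁ x) - (-(U₂ x) ^ 2 - K₂ x))) x :=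
        (hg_deriv x hx).mul (hW_deriv x hx')
      exact ((h1.sub h2).hasDerivWithinAt)
    · intro x hx
      rw [hIntIoo] at hx
      have hx' : x ∈ Icc s₀ τ := Ioo_subset_Icc_self hx
      have hgpos : 0 < g x := Real.exp_pos _
      have hWx : 0 ≤ W x := hWnonneg x hx'
      have hord := horder x hx'
      have habs : 0 ≤ |K₁ x - K₂ x| + (K₁ x - K₂ x) := by
        have := neg_abs_le (K₁ x - K₂ x); linarith
      have hsum : 2 * l x ≤ U₁ x + U₂ x := by linarith [hord.1, hord.2]
      have hfactor : (-(U₁ x) ^ 2 - K₁ x) - (-(U₂ x) ^ 2 - K₂ x)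
          = -((U₁ x + U₂ x) * W x) - (K₁ x - K₂ x) := by
        simp only [hW_def]; ring
      rw [hfactor]
      have key : 0 ≤ g x * ((|K₁ x - K₂ x| + (K₁ x - K₂ x)) + (U₁ x + U₂ x - 2 * l x) * W x) := by
        apply mul_nonneg hgpos.le
        have : 0 ≤ (U₁ x + U₂ x - 2 * l x) * W x :=
          mul_nonneg (by linarith) hWx
        linarith
      simp only [hh_def]
      nlinarith [key]
  -- conclude g τ * W τ ≤ ∫ h
  have hFτ : F s₀ ≤ F τ := hF_mono (left_mem_Icc.2 hs) (right_mem_Icc.2 hs) hs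
  have hFs₀ : F s₀ = 0 := by
    simp [hF_def, hW_def, heq, intervalIntegral.integral_same]
  have hmain : g τ * W τ ≤ ∫ s in s₀..τ, h s := by
    have := hFτ; rw [hFs₀] at this; simp only [hF_def] at this; linarith
  -- rewrite the target integral
  have hrw : (∫ s in s₀..τ, Real.exp (-2 * ∫ a in s..τ, l a) * |K₁ s - K₂ s|)
      = Real.exp (-(2 * A τ)) * ∫ s in s₀..τ, h s := by
    rw [← intervalIntegral.integral_const_mul]
    apply intervalIntegral.integral_congr
    intro s hsx
    rw [huIcc] at hsx
    have hadd : A s + (∫ a in s..τ, l a) = A τ :=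
      intervalIntegral.integral_add_adjacent_intervals
        (hl_int s₀ (left_mem_Icc.2 hs) s hsx) (hl_int s hsx τ (right_mem_Icc.2 hs))
    have h2 : (∫ a in s..τ, l a) = A τ - A s := by linarith
    beta_reduce
    rw [h2]
    have harg : -2 * (A τ - A s) = -(2 * A τ) + 2 * A s := by ring
    rw [harg, Real.exp_add]
    simp only [hh_def, hg_def]
    ring
  rw [hrw]
  have hWτ : W τ = U₁ τ - U₂ τ := rfl
  have : U₁ τ - U₂ τ = Real.exp (-(2 * A τ)) * (g τ * W τ) := by
    rw [← mul_assoc, ← Real.exp_add, neg_add_cancel, Real.exp_zero, one_mul]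
  rw [this]
  exact mul_le_mul_of_nonneg_left hmain (Real.exp_pos _).le
end
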